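/- Let H be a square complex block lower triangular matrix and let H⁽ℓ⁾ denote its last (ℓ-th) sub-diagonal block matrix, i.e., the matrix retaining only the blocks H_{ij} with i − j = ℓ where ℓ is the largest index for which such a block is nonzero. Then for all ρ ≥ 0, det(I + ρ H H^†) ≥ det(I + ρ H⁽ℓ⁾ (H⁽ℓ⁾)^†). -/

import Mathlib

open Matrix

section Aux

variable {n m : Type*} [Fintype n] [DecidableEq n] [Fintype m] [DecidableEq m]

private lemma cb1 (C : Matrix n m ℂ) (B : Matrix m n ℂ) :
    det (C * B) = ∑ f : n → m, det (C.submatrix id f) * ∏ i, B (f i) i := by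
  have h : det (C * B) = ∑ f : n → m, ∑ σ : Equiv.Perm n,
      ((Equiv.Perm.sign σ : ℤ) : ℂ) * ∏ i, (C (σ i) (f i) * B (f i) i) := by
    simp only [det_apply', mul_apply, Finset.prod_univ_sum, Finset.mul_sum,
      Fintype.piFinset_univ]
    rw [Finset.sum_comm]
  rw [h]
  refine Finset.sum_congr rfl fun f _ => ?_
  rw [det_apply', Finset.sum_mul]
  refine Finset.sum_congr rfl fun σ _ => ?_
  rw [Finset.prod_mul_distrib, mul_assoc]
  simp [Matrix.submatrix_apply]

private lemma cb2 (C : Matrix n m ℂ) :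
    (Nat.factorial (Fintype.card n) : ℂ) * det (C * Cᴴ) =
      ∑ f : n → m, det (C.submatrix id f) * (starRingEnd ℂ) (det (C.submatrix id f)) := by
  have base : det (C * Cᴴ) = ∑ f : n → m, det (C.submatrix id f) *
      ∏ i, (starRingEnd ℂ) (C i (f i)) := by
    rw [cb1]
    refine Finset.sum_congr rfl fun f _ => ?_
    congr 1
  symm
  calc ∑ f : n → m, det (C.submatrix id f) * (starRingEnd ℂ) (det (C.submatrix id f))
      = ∑ f : n → m, ∑ τ : Equiv.Perm n, ((Equiv.Perm.sign τ : ℤ) : ℂ) *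
          (det (C.submatrix id f) * ∏ i, (starRingEnd ℂ) (C (τ i) (f i))) := by
        refine Finset.sum_congr rfl fun f _ => ?_
        have hconj : (starRingEnd ℂ) (det (C.submatrix id f))
            = ∑ τ : Equiv.Perm n, ((Equiv.Perm.sign τ : ℤ) : ℂ)
              * ∏ i, (starRingEnd ℂ) (C (τ i) (f i)) := by
          rw [det_apply', map_sum]
          refine Finset.sum_congr rfl fun τ _ => ?_
          rw [_root_.map_mul, map_prod]
          simp [Matrix.submatrix_apply, map_intCast]
        rw [hconj, Finset.mul_sum]
        refine Finset.sum_congr rfl fun τ _ => ?_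
        ring
    _ = ∑ τ : Equiv.Perm n, ∑ f : n → m, ((Equiv.Perm.sign τ : ℤ) : ℂ) *
          (det (C.submatrix id f) * ∏ i, (starRingEnd ℂ) (C (τ i) (f i))) :=
        Finset.sum_comm
    _ = ∑ _τ : Equiv.Perm n, ∑ g : n → m,
          det (C.submatrix id g) * ∏ i, (starRingEnd ℂ) (C i (g i)) := by
        refine Finset.sum_congr rfl fun τ _ => ?_
        refine Fintype.sum_equiv (Equiv.arrowCongr τ (Equiv.refl m)) _ _ fun f => ?_
        have h1 : C.submatrix id ((Equiv.arrowCongr τ (Equiv.refl m)) f)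
            = (C.submatrix id f).submatrix id ⇑τ.symm := by
          ext p i
          simp [Equiv.arrowCongr]
        have h2 : (∏ i, (starRingEnd ℂ) (C i (((Equiv.arrowCongr τ (Equiv.refl m)) f) i)))
            = ∏ i, (starRingEnd ℂ) (C (τ i) (f i)) := by
          rw [← Equiv.prod_comp τ (fun i => (starRingEnd ℂ)
            (C i (((Equiv.arrowCongr τ (Equiv.refl m)) f) i)))]
          refine Finset.prod_congr rfl fun i _ => ?_
          simp [Equiv.arrowCongr]
        rw [h1, h2, Matrix.det_permute', Equiv.Perm.sign_symm]
        ring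
    _ = (Nat.factorial (Fintype.card n) : ℂ) * det (C * Cᴴ) := by
        rw [Finset.sum_const, Finset.card_univ, Fintype.card_perm, ← base, nsmul_eq_mul]

variable {n m : Type*} [Fintype n] [DecidableEq n] [Fintype m] [DecidableEq m]

/-- The auxiliary rectangular matrix `[1 | √ρ A]`. -/
private noncomputable def ccmat (ρ : ℝ) (A : Matrix n n ℂ) : Matrix n (n ⊕ n) ℂ :=
  Matrix.of fun p j => Sum.elim (fun q => if p = q then (1 : ℂ) else 0)
    (fun q => ((Real.sqrt ρ : ℝ) : ℂ) * A p q) j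

private lemma ccmat_mul (ρ : ℝ) (hρ : 0 ≤ ρ) (A : Matrix n n ℂ) :
    ccmat ρ A * (ccmat ρ A)ᴴ = 1 + ρ • (A * Aᴴ) := by
  have hrr : ((Real.sqrt ρ : ℝ) : ℂ) * (starRingEnd ℂ) ((Real.sqrt ρ : ℝ) : ℂ) = (ρ : ℂ) := by
    rw [Complex.conj_ofReal, ← Complex.ofReal_mul, Real.mul_self_sqrt hρ]
  ext p q
  rw [Matrix.mul_apply, Fintype.sum_sum_type, Matrix.add_apply]
  have e1 : (∑ j : n, ccmat ρ A p (Sum.inl j) * (ccmat ρ A)ᴴ (Sum.inl j) q)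
      = (1 : Matrix n n ℂ) p q := by
    rw [Finset.sum_eq_single p]
    · simp [ccmat, Matrix.conjTranspose_apply, Matrix.one_apply, eq_comm, apply_ite]
    · intro j _ hj
      simp [ccmat, (Ne.symm hj : ¬ p = j)]
    · intro h; exact absurd (Finset.mem_univ p) h
  have e2 : (∑ j : n, ccmat ρ A p (Sum.inr j) * (ccmat ρ A)ᴴ (Sum.inr j) q)
      = (ρ • (A * Aᴴ)) p q := by
    have key : ∀ j : n, ccmat ρ A p (Sum.inr j) * (ccmat ρ A)ᴴ (Sum.inr j) q
        = (ρ : ℂ) * (A p j * (starRingEnd ℂ) (A q j)) := by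
      intro j
      have : (ccmat ρ A)ᴴ (Sum.inr j) q
          = (starRingEnd ℂ) ((Real.sqrt ρ : ℝ) : ℂ) * (starRingEnd ℂ) (A q j) := by
        rw [Matrix.conjTranspose_apply]
        simp only [ccmat, Matrix.of_apply, Sum.elim_inr, Complex.star_def, _root_.map_mul]
      rw [this]
      simp only [ccmat, Matrix.of_apply, Sum.elim_inr]
      rw [show ((Real.sqrt ρ : ℝ) : ℂ) * A p j
          * ((starRingEnd ℂ) ((Real.sqrt ρ : ℝ) : ℂ) * (starRingEnd ℂ) (A q j))
          = (((Real.sqrt ρ : ℝ) : ℂ) * (starRingEnd ℂ) ((Real.sqrt ρ : ℝ) : ℂ))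
            * (A p j * (starRingEnd ℂ) (A q j)) by ring, hrr]
    rw [Finset.sum_congr rfl fun j _ => key j, ← Finset.mul_sum]
    rw [Matrix.smul_apply, Matrix.mul_apply, Complex.real_smul]
    congr 1
  rw [e1, e2]

private lemma expand_det (ρ : ℝ) (hρ : 0 ≤ ρ) (A : Matrix n n ℂ) :
    (Nat.factorial (Fintype.card n) : ℝ) * ((1 + ρ • (A * Aᴴ)).det).re
      = ∑ f : n → n ⊕ n, Complex.normSq (det ((ccmat ρ A).submatrix id f)) := by
  have h := cb2 (ccmat ρ A)
  rw [ccmat_mul ρ hρ A] at h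
  have h2 : ∀ f : n → n ⊕ n,
      det ((ccmat ρ A).submatrix id f) * (starRingEnd ℂ) (det ((ccmat ρ A).submatrix id f))
        = ((Complex.normSq (det ((ccmat ρ A).submatrix id f)) : ℝ) : ℂ) := fun f =>
    Complex.mul_conj _
  rw [Finset.sum_congr rfl fun f _ => h2 f] at h
  have := congrArg Complex.re h
  simpa [Complex.mul_re] using this

private lemma termwise (wt : n → ℕ) (ℓ : ℕ) (H Hl : Matrix n n ℂ)
    (hmax : ∀ p q : n, wt q + ℓ < wt p → H p q = 0)
    (hHl : ∀ p q : n, Hl p q = if wt p = wt q + ℓ then H p q else 0)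
    (ρ : ℝ) (f : n → n ⊕ n) :
    Complex.normSq (det ((ccmat ρ Hl).submatrix id f))
      ≤ Complex.normSq (det ((ccmat ρ H).submatrix id f)) := by
  set cw : n ⊕ n → ℕ := Sum.elim wt (fun q => wt q + ℓ) with hcw
  have entry_le : ∀ (p : n) (j : n ⊕ n), ccmat ρ H p j ≠ 0 → wt p ≤ cw j := by
    intro p j hne
    rcases j with q | q
    · have hpq : p = q := by
        by_contra hpq
        exact hne (by simp [ccmat, hpq])
      subst hpq; simp [hcw]
    · have hH : H p q ≠ 0 := by
        intro h0
        exact hne (by simp [ccmat, h0])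
      simp only [hcw, Sum.elim_inr]
      by_contra hlt
      exact hH (hmax p q (by omega))
  have entry_wt : ∀ (p : n) (j : n ⊕ n), ccmat ρ Hl p j ≠ 0 → wt p = cw j := by
    intro p j hne
    rcases j with q | q
    · have hpq : p = q := by
        by_contra hpq
        exact hne (by simp [ccmat, hpq])
      subst hpq; simp [hcw]
    · have hH : Hl p q ≠ 0 := by
        intro h0
        exact hne (by simp [ccmat, h0])
      rw [hHl p q] at hH
      simp only [hcw, Sum.elim_inr]
      by_contra hno
      rw [if_neg hno] at hH
      exact hH rfl
  have entry_eq : ∀ (p : n) (j : n ⊕ n), wt p = cw j → ccmat ρ Hl p j = ccmat ρ H p j := by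
    intro p j hwt
    rcases j with q | q
    · rfl
    · simp only [ccmat, Matrix.of_apply, Sum.elim_inr]
      rw [hHl p q, if_pos (by simpa [hcw] using hwt)]
  have entry_zero : ∀ (p : n) (j : n ⊕ n), ccmat ρ H p j = 0 → ccmat ρ Hl p j = 0 := by
    intro p j h0
    rcases j with q | q
    · exact h0
    · simp only [ccmat, Matrix.of_apply, Sum.elim_inr] at h0 ⊢
      rw [hHl p q]
      by_cases hc : wt p = wt q + ℓ
      · rw [if_pos hc]; exact h0
      · rw [if_neg hc, mul_zero]
  by_cases hcase : (∑ i : n, cw (f i)) = ∑ p : n, wt p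
  · have hdet : det ((ccmat ρ Hl).submatrix id f) = det ((ccmat ρ H).submatrix id f) := by
      rw [det_apply', det_apply']
      refine Finset.sum_congr rfl fun σ _ => ?_
      simp only [Matrix.submatrix_apply, id_eq]
      congr 1
      by_cases hz : ∀ i : n, ccmat ρ H (σ i) (f i) ≠ 0
      · have hle : ∀ i : n, wt (σ i) ≤ cw (f i) := fun i => entry_le (σ i) (f i) (hz i)
        have hsum : (∑ i : n, wt (σ i)) = ∑ i : n, cw (f i) := by
          rw [hcase]
          exact Equiv.sum_comp σ wt
        have heach := (Finset.sum_eq_sum_iff_of_le (fun i _ => hle i)).mp hsum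
        exact Finset.prod_congr rfl fun i _ =>
          entry_eq (σ i) (f i) (heach i (Finset.mem_univ i))
      · push_neg at hz
        obtain ⟨i, hi⟩ := hz
        rw [Finset.prod_eq_zero (Finset.mem_univ i) (entry_zero (σ i) (f i) hi),
            Finset.prod_eq_zero (Finset.mem_univ i) hi]
    rw [hdet]
  · have hdet : det ((ccmat ρ Hl).submatrix id f) = 0 := by
      rw [det_apply']
      refine Finset.sum_eq_zero fun σ _ => ?_
      have hzero : (∏ i : n, ((ccmat ρ Hl).submatrix id f) (σ i) i) = 0 := by
        by_contra hne0
        have h0 := Finset.prod_ne_zero_iff.mp hne0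
        have heach : ∀ i : n, wt (σ i) = cw (f i) := fun i =>
          entry_wt (σ i) (f i) (by simpa using h0 i (Finset.mem_univ i))
        exact hcase (((Finset.sum_congr rfl fun i _ => heach i).symm).trans
          (Equiv.sum_comp σ wt))
      rw [hzero, mul_zero]
    rw [hdet]
    simpa using Complex.normSq_nonneg _

end Aux

/-- For a block lower triangular matrix `H` and its last sub-diagonal block matrix `H⁽ℓ⁾`
(retaining only blocks `H_{ij}` with `i - j = ℓ`, where `ℓ` is the largest index for which
such a block is nonzero), `det(I + ρ H H†) ≥ det(I + ρ H⁽ℓ⁾ (H⁽ℓ⁾)†)` for all `ρ ≥ 0`. -/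
theorem stmt_10 (N : ℕ) (sz : Fin N → ℕ)
    (H : Matrix ((i : Fin N) × Fin (sz i)) ((i : Fin N) × Fin (sz i)) ℂ)
    (hblt : ∀ p q : (i : Fin N) × Fin (sz i), p.1 < q.1 → H p q = 0)
    (ℓ : ℕ)
    (hmax : ∀ p q : (i : Fin N) × Fin (sz i), (q.1 : ℕ) + ℓ < (p.1 : ℕ) → H p q = 0)
    (hne : ∃ p q : (i : Fin N) × Fin (sz i), (p.1 : ℕ) = (q.1 : ℕ) + ℓ ∧ H p q ≠ 0)
    (Hl : Matrix ((i : Fin N) × Fin (sz i)) ((i : Fin N) × Fin (sz i)) ℂ)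
    (hHl : ∀ p q : (i : Fin N) × Fin (sz i),
      Hl p q = if (p.1 : ℕ) = (q.1 : ℕ) + ℓ then H p q else 0)
    (ρ : ℝ) (hρ : 0 ≤ ρ) :
    ((1 + ρ • (Hl * Hlᴴ)).det).re ≤ ((1 + ρ • (H * Hᴴ)).det).re := by
  classical
  have h1 := expand_det ρ hρ Hl
  have h2 := expand_det ρ hρ H
  have hsum : (∑ f : ((i : Fin N) × Fin (sz i)) → ((i : Fin N) × Fin (sz i)) ⊕ ((i : Fin N) × Fin (sz i)),
        Complex.normSq (det ((ccmat ρ Hl).submatrix id f)))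
      ≤ ∑ f : ((i : Fin N) × Fin (sz i)) → ((i : Fin N) × Fin (sz i)) ⊕ ((i : Fin N) × Fin (sz i)),
        Complex.normSq (det ((ccmat ρ H).submatrix id f)) :=
    Finset.sum_le_sum fun f _ =>
      termwise (fun p => (p.1 : ℕ)) ℓ H Hl hmax hHl ρ f
  have hpos : (0 : ℝ) < (Nat.factorial (Fintype.card ((i : Fin N) × Fin (sz i))) : ℝ) := by
    exact_mod_cast Nat.factorial_pos _
  exact (mul_le_mul_iff_right₀ hpos).mp (by rw [h1, h2]; exact hsum)
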